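/- As q → 1⁻, the q-Pochhammer symbol satisfies log(-q;q)_∞ = -π²/(12 log q) - (log 2)/2 + O(log q). -/

import Mathlib

open scoped Real
open Asymptotics Filter Set MeasureTheory Topology

noncomputable section

namespace QPAux

/-- `f t = log (1 + e^{-t})`. -/
def f (t : ℝ) : ℝ := Real.log (1 + Real.exp (-t))

/-- derivative of `f`. -/
def d (t : ℝ) : ℝ := -1 / (Real.exp t + 1)

lemma one_add_exp_pos (t : ℝ) : (0:ℝ) < 1 + Real.exp (-t) := by positivity

lemma f_nonneg (t : ℝ) : 0 ≤ f t :=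
  Real.log_nonneg (by nlinarith [Real.exp_pos (-t)])

lemma f_le (t : ℝ) : f t ≤ Real.exp (-t) := by
  have := Real.log_le_sub_one_of_pos (one_add_exp_pos t)
  simpa [f] using this

lemma hasDerivAt_f (t : ℝ) : HasDerivAt f (d t) t := by
  have h1 : HasDerivAt (fun t : ℝ => 1 + Real.exp (-t)) (-Real.exp (-t)) t := by
    simpa using ((hasDerivAt_neg t).exp.const_add 1)
  have h2 := (Real.hasDerivAt_log (one_add_exp_pos t).ne').comp t h1
  refine h2.congr_deriv ?_
  have h3 := Real.exp_pos t
  have h4 : Real.exp (-t) = (Real.exp t)⁻¹ := by rw [Real.exp_neg]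
  rw [d]
  field_simp [h4]
  rw [h4, mul_add, inv_mul_cancel₀ h3.ne']
  ring

lemma f_cont : Continuous f :=
  (Differentiable.continuous fun t => (hasDerivAt_f t).differentiableAt)

lemma d_mono : Monotone d := by
  intro s t hst
  have h1 : (0:ℝ) < Real.exp s + 1 := by positivity
  have h2 : (0:ℝ) < Real.exp t + 1 := by positivity
  have := Real.exp_le_exp.2 hst
  rw [d, d, div_le_div_iff₀ h1 h2]
  nlinarith

lemma d_nonpos (t : ℝ) : d t ≤ 0 := by
  have : (0:ℝ) < Real.exp t + 1 := by positivity
  rw [d]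
  apply div_nonpos_of_nonpos_of_nonneg <;> linarith

lemma d_zero : d 0 = -(1/2) := by
  simp [d]
  norm_num

lemma d_cont : Continuous d :=
  continuous_const.div (Real.continuous_exp.add continuous_const)
    (fun t => by positivity)

lemma ftc (a b : ℝ) : (∫ t in a..b, d t) = f b - f a :=
  intervalIntegral.integral_eq_sub_of_hasDerivAt (fun x _ => hasDerivAt_f x)
    (d_cont.intervalIntegrable a b)

lemma integral_b_sub (a b : ℝ) : (∫ x in a..b, (b - x)) = (b - a)^2/2 := by
  rw [intervalIntegral.integral_sub (intervalIntegrable_const) intervalIntegral.intervalIntegrable_id,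
    intervalIntegral.integral_const, integral_id]
  simp only [smul_eq_mul]
  ring

lemma integral_sub_a (a b : ℝ) : (∫ x in a..b, (x - a)) = (b - a)^2/2 := by
  rw [intervalIntegral.integral_sub intervalIntegral.intervalIntegrable_id intervalIntegrable_const,
    intervalIntegral.integral_const, integral_id]
  simp only [smul_eq_mul]
  ring

lemma pointwise_ub {a b x : ℝ} (hx : x ∈ Icc a b) :
    f a + f b - 2 * f x ≤ d b * (b - x) - d a * (x - a) := by
  have h1 : f b - f x ≤ d b * (b - x) := by
    have := intervalIntegral.integral_mono_on (μ := volume) hx.2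
      (d_cont.intervalIntegrable x b) (intervalIntegrable_const (c := d b))
      (fun y hy => d_mono hy.2)
    rw [ftc, intervalIntegral.integral_const, smul_eq_mul] at this
    linarith [this]
  have h2 : f a - f x ≤ -(d a * (x - a)) := by
    have := intervalIntegral.integral_mono_on (μ := volume) hx.1
      (intervalIntegrable_const (c := d a)) (d_cont.intervalIntegrable a x)
      (fun y hy => d_mono hy.1)
    rw [ftc, intervalIntegral.integral_const, smul_eq_mul] at this
    linarith [this]
  linarith

lemma pointwise_lb {a b x : ℝ} (hx : x ∈ Icc a b) :
    d a * (b - x) - d b * (x - a) ≤ f a + f b - 2 * f x := by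
  have h1 : d a * (b - x) ≤ f b - f x := by
    have := intervalIntegral.integral_mono_on (μ := volume) hx.2
      (intervalIntegrable_const (c := d a)) (d_cont.intervalIntegrable x b)
      (fun y hy => d_mono (hx.1.trans hy.1))
    rw [ftc, intervalIntegral.integral_const, smul_eq_mul] at this
    linarith [this]
  have h2 : -(d b * (x - a)) ≤ f a - f x := by
    have := intervalIntegral.integral_mono_on (μ := volume) hx.1
      (d_cont.intervalIntegrable a x) (intervalIntegrable_const (c := d b))
      (fun y hy => d_mono (hy.2.trans hx.2))
    rw [ftc, intervalIntegral.integral_const, smul_eq_mul] at this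
    linarith [this]
  linarith

lemma trapezoid {a b : ℝ} (hab : a ≤ b) :
    |(b - a)/2 * (f a + f b) - ∫ x in a..b, f x| ≤ (b - a)^2/4 * (d b - d a) := by
  have hJeq : (∫ x in a..b, (f a + f b - 2 * f x))
      = (b - a) * (f a + f b) - 2 * ∫ x in a..b, f x := by
    rw [intervalIntegral.integral_sub intervalIntegrable_const
      ((f_cont.intervalIntegrable a b).const_mul 2),
      intervalIntegral.integral_const, intervalIntegral.integral_const_mul, smul_eq_mul]
  have hub : (∫ x in a..b, (f a + f b - 2 * f x))
      ≤ d b * ((b-a)^2/2) - d a * ((b-a)^2/2) := by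
    have := intervalIntegral.integral_mono_on (μ := volume) hab
      ((continuous_const.sub (continuous_const.mul f_cont)).intervalIntegrable _ _)
      (((continuous_const.mul (continuous_const.sub continuous_id)).sub
        (continuous_const.mul (continuous_id.sub continuous_const))).intervalIntegrable _ _)
      (fun x hx => pointwise_ub hx)
    calc (∫ x in a..b, (f a + f b - 2 * f x))
        ≤ ∫ x in a..b, (d b * (b - x) - d a * (x - a)) := this
      _ = d b * ((b-a)^2/2) - d a * ((b-a)^2/2) := by
          rw [intervalIntegral.integral_sub, intervalIntegral.integral_const_mul,
            intervalIntegral.integral_const_mul, integral_b_sub, integral_sub_a]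
          · exact (Continuous.intervalIntegrable (by continuity) _ _)
          · exact (Continuous.intervalIntegrable (by continuity) _ _)
  have hlb : d a * ((b-a)^2/2) - d b * ((b-a)^2/2)
      ≤ (∫ x in a..b, (f a + f b - 2 * f x)) := by
    have := intervalIntegral.integral_mono_on (μ := volume) hab
      (((continuous_const.mul (continuous_const.sub continuous_id)).sub
        (continuous_const.mul (continuous_id.sub continuous_const))).intervalIntegrable _ _)
      ((continuous_const.sub (continuous_const.mul f_cont)).intervalIntegrable _ _)
      (fun x hx => pointwise_lb hx)
    calc d a * ((b-a)^2/2) - d b * ((b-a)^2/2)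
        = ∫ x in a..b, (d a * (b - x) - d b * (x - a)) := by
          rw [intervalIntegral.integral_sub, intervalIntegral.integral_const_mul,
            intervalIntegral.integral_const_mul, integral_b_sub, integral_sub_a]
          · exact (Continuous.intervalIntegrable (by continuity) _ _)
          · exact (Continuous.intervalIntegrable (by continuity) _ _)
      _ ≤ _ := this
  rw [abs_le]
  constructor
  · rw [hJeq] at hlb; linarith
  · rw [hJeq] at hub; linarith

lemma hInt : IntegrableOn f (Ioi (0:ℝ)) volume := by
  refine Integrable.mono (exp_neg_integrableOn_Ioi 0 (one_pos)) f_cont.aestronglyMeasurable ?_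
  filter_upwards with t
  rw [Real.norm_of_nonneg (f_nonneg t), Real.norm_of_nonneg (Real.exp_pos _).le]
  simpa using f_le t

lemma exp_pow (L : ℝ) (n : ℕ) : Real.exp (-L) ^ n = Real.exp (-((n:ℝ) * L)) := by
  rw [← Real.exp_nat_mul]; ring_nf

lemma summable_f {L : ℝ} (hL : 0 < L) : Summable (fun n : ℕ => f (((n:ℝ)+1) * L)) := by
  have hr1 : Real.exp (-L) < 1 := Real.exp_lt_one_iff.mpr (by linarith)
  have hgeo : Summable (fun n : ℕ => Real.exp (-L) ^ (n+1)) :=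
    ((summable_geometric_of_lt_one (Real.exp_pos _).le hr1).mul_left (Real.exp (-L))).congr
      (fun n => by rw [pow_succ]; ring)
  refine Summable.of_nonneg_of_le (fun n => f_nonneg _) (fun n => ?_) hgeo
  have := f_le (((n:ℝ)+1) * L)
  rw [exp_pow L (n+1)]
  push_cast
  push_cast at this
  exact this

lemma key {L : ℝ} (hL : 0 < L) :
    |(∑' n : ℕ, f (((n:ℝ)+1) * L)) - (∫ x in Ioi (0:ℝ), f x)/L + f 0 / 2| ≤ L/8 := by
  set S := ∑' n : ℕ, f (((n:ℝ)+1) * L) with hSdef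
  set I := ∫ x in Ioi (0:ℝ), f x with hIdef
  set E : ℕ → ℝ := fun k =>
    L/2 * (f ((k:ℝ)*L) + f (((k:ℝ)+1)*L)) - ∫ x in ((k:ℝ)*L)..(((k:ℝ)+1)*L), f x with hEdef
  have hEbound : ∀ k : ℕ, |E k| ≤ L^2/4 * (d (((k:ℝ)+1)*L) - d ((k:ℝ)*L)) := by
    intro k
    have hab : (k:ℝ)*L ≤ ((k:ℝ)+1)*L := by nlinarith
    have := trapezoid hab
    have hba : ((k:ℝ)+1)*L - (k:ℝ)*L = L := by ring
    rw [hba] at this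
    exact this
  -- partial sum identity
  have hpartial : ∀ N : ℕ, ∑ k ∈ Finset.range N, E k
      = L * (∑ k ∈ Finset.range N, f (((k:ℝ)+1) * L))
        + L/2 * (f 0 - f ((N:ℝ)*L)) - ∫ x in (0:ℝ)..((N:ℝ)*L), f x := by
    intro N
    have hadj : ∑ k ∈ Finset.range N, ∫ x in ((k:ℝ)*L)..(((k:ℝ)+1)*L), f x
        = ∫ x in (0:ℝ)..((N:ℝ)*L), f x := by
      have := intervalIntegral.sum_integral_adjacent_intervals
        (μ := volume) (a := fun k : ℕ => (k:ℝ)*L) (n := N)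
        (fun k _ => f_cont.intervalIntegrable _ _)
      simp only [Nat.cast_zero, zero_mul] at this
      rw [← this]
      refine Finset.sum_congr rfl fun k _ => ?_
      push_cast
      ring_nf
    have htel : ∑ k ∈ Finset.range N, (f ((k:ℝ)*L) - f (((k:ℝ)+1)*L))
        = f 0 - f ((N:ℝ)*L) := by
      have := Finset.sum_range_sub' (f := fun k : ℕ => f ((k:ℝ)*L)) (n := N)
      simp only [Nat.cast_zero, zero_mul] at this
      rw [← this]
      refine Finset.sum_congr rfl fun k _ => ?_
      push_cast
      ring_nf
    calc ∑ k ∈ Finset.range N, E k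
        = ∑ k ∈ Finset.range N, (L * f (((k:ℝ)+1) * L)
            + L/2 * (f ((k:ℝ)*L) - f (((k:ℝ)+1)*L))
            - ∫ x in ((k:ℝ)*L)..(((k:ℝ)+1)*L), f x) :=
          Finset.sum_congr rfl fun k _ => by rw [hEdef]; ring
      _ = _ := by
          rw [Finset.sum_sub_distrib, Finset.sum_add_distrib, ← Finset.mul_sum,
            ← Finset.mul_sum, hadj, htel]
  -- partial sum bound
  have hbound : ∀ N : ℕ, |∑ k ∈ Finset.range N, E k| ≤ L^2/8 := by
    intro N
    have htel : ∑ k ∈ Finset.range N, (d (((k:ℝ)+1)*L) - d ((k:ℝ)*L))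
        = d ((N:ℝ)*L) - d 0 := by
      have := Finset.sum_range_sub (f := fun k : ℕ => d ((k:ℝ)*L)) (n := N)
      simp only [Nat.cast_zero, zero_mul] at this
      rw [← this]
      refine Finset.sum_congr rfl fun k _ => ?_
      push_cast
      ring_nf
    calc |∑ k ∈ Finset.range N, E k| ≤ ∑ k ∈ Finset.range N, |E k| :=
          Finset.abs_sum_le_sum_abs _ _
      _ ≤ ∑ k ∈ Finset.range N, L^2/4 * (d (((k:ℝ)+1)*L) - d ((k:ℝ)*L)) :=
          Finset.sum_le_sum fun k _ => hEbound k
      _ = L^2/4 * (d ((N:ℝ)*L) - d 0) := by rw [← Finset.mul_sum, htel]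
      _ ≤ L^2/8 := by
          have h1 := d_nonpos ((N:ℝ)*L)
          rw [d_zero]
          nlinarith
  -- limits
  have hS : HasSum (fun n : ℕ => f (((n:ℝ)+1) * L)) S := (summable_f hL).hasSum
  have h1 : Tendsto (fun N : ℕ => ∑ k ∈ Finset.range N, f (((k:ℝ)+1) * L))
      atTop (𝓝 S) := hS.tendsto_sum_nat
  have h2 : Tendsto (fun N : ℕ => f ((N:ℝ)*L)) atTop (𝓝 0) := by
    have hr1 : Real.exp (-L) < 1 := Real.exp_lt_one_iff.mpr (by linarith)
    have hpow : Tendsto (fun N : ℕ => Real.exp (-L) ^ N) atTop (𝓝 0) :=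
      tendsto_pow_atTop_nhds_zero_of_lt_one (Real.exp_pos _).le hr1
    refine squeeze_zero (fun N => f_nonneg _) (fun N => ?_) hpow
    rw [exp_pow L N]
    exact f_le _
  have h3 : Tendsto (fun N : ℕ => ∫ x in (0:ℝ)..((N:ℝ)*L), f x) atTop (𝓝 I) := by
    refine intervalIntegral_tendsto_integral_Ioi 0 hInt ?_
    exact Tendsto.atTop_mul_const hL tendsto_natCast_atTop_atTop
  have hlim : Tendsto (fun N : ℕ => ∑ k ∈ Finset.range N, E k) atTop
      (𝓝 (L * S + L/2 * (f 0 - 0) - I)) := by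
    simp only [hpartial]
    exact ((h1.const_mul L).add ((tendsto_const_nhds.sub h2).const_mul (L/2))).sub h3
  have habs : |L * S + L/2 * (f 0 - 0) - I| ≤ L^2/8 :=
    le_of_tendsto hlim.abs (Filter.Eventually.of_forall hbound)
  have heq : S - I/L + f 0 / 2 = (L * S + L/2 * (f 0 - 0) - I)/L := by
    field_simp
    ring
  rw [heq, abs_div, abs_of_pos hL]
  have h9 : L^2/8/L = L/8 := by field_simp
  rw [← h9]
  gcongr

lemma f_def : ∀ t, f t = Real.log (1 + Real.exp (-t)) := fun _ => rfl

/-- summands of the expansion of `f`. -/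
def F (k : ℕ) (t : ℝ) : ℝ := (-1:ℝ)^k / ((k:ℝ)+1) * Real.exp (-((k:ℝ)+1) * t)

lemma hasSum_F {t : ℝ} (ht : 0 < t) : HasSum (fun k => F k t) (f t) := by
  set e := Real.exp (-t) with he
  have he1 : |(-e : ℝ)| < 1 := by
    rw [abs_neg, abs_of_pos (Real.exp_pos _)]
    exact Real.exp_lt_one_iff.mpr (by linarith)
  have h := (Real.hasSum_pow_div_log_of_abs_lt_one he1).neg
  have h2 : -(-Real.log (1 - -e)) = f t := by
    rw [f_def]
    ring_nf
    rfl
  rw [h2] at h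
  have heq : (fun b : ℕ => -((-e) ^ (b + 1) / ((b:ℝ) + 1))) = (fun k => F k t) := by
    funext k
    simp only [F]
    have : (-e)^(k+1) = (-1:ℝ)^(k+1) * e^(k+1) := by
      rw [neg_pow]
    rw [this]
    have : e^(k+1) = Real.exp (-((k:ℝ)+1) * t) := by
      rw [he, ← Real.exp_nat_mul]
      push_cast
      ring_nf
    rw [this, pow_succ]
    ring
  exact heq ▸ h

lemma integral_exp_rate (c : ℝ) (hc : 0 < c) :
    (∫ t in Ioi (0:ℝ), Real.exp (-c * t)) = 1/c := by
  have := integral_comp_mul_left_Ioi (g := fun x => Real.exp (-x)) (a := 0) (b := c) hc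
  simp only [mul_zero, integral_exp_neg_Ioi, neg_zero, Real.exp_zero, smul_eq_mul, mul_one] at this
  simp only [neg_mul]
  rw [this, one_div]

lemma F_integrable (k : ℕ) : IntegrableOn (F k) (Ioi (0:ℝ)) volume := by
  have hpos : (0:ℝ) < (k:ℝ)+1 := by positivity
  exact (exp_neg_integrableOn_Ioi 0 hpos).const_mul _

lemma F_norm_integral (k : ℕ) :
    (∫ t in Ioi (0:ℝ), ‖F k t‖) = 1/((k:ℝ)+1)^2 := by
  have hpos : (0:ℝ) < (k:ℝ)+1 := by positivity
  have hn : ∀ t : ℝ, ‖F k t‖ = (1/((k:ℝ)+1)) * Real.exp (-((k:ℝ)+1) * t) := by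
    intro t
    rw [F, norm_mul, norm_div, Real.norm_of_nonneg (Real.exp_pos _).le]
    simp [abs_of_pos hpos]
  simp only [hn]
  rw [MeasureTheory.integral_const_mul, integral_exp_rate _ hpos]
  field_simp
lemma hasSum_congr' {f g : ℕ → ℝ} {a : ℝ} (h : HasSum f a) (he : ∀ n, f n = g n) :
    HasSum g a := (funext he : f = g) ▸ h

lemma hshift : HasSum (fun n : ℕ => 1/(((n:ℝ))+1)^2) (π^2/6) := by
  have hζ : HasSum (fun n : ℕ => 1/((n:ℝ))^2) (π^2/6) := hasSum_zeta_two
  have h := (hasSum_nat_add_iff (f := fun n : ℕ => 1/((n:ℝ))^2) 1).mpr (by simpa using hζ)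
  exact hasSum_congr' h (fun n => by push_cast; ring)

lemma summable_shift : Summable (fun n : ℕ => 1/(((n:ℝ))+1)^2) := hshift.summable

lemma hodd : HasSum (fun k : ℕ => 1/(((2*k+1:ℕ):ℝ)+1)^2) (π^2/24) := by
  have h := hshift.mul_left (1/4)
  have hv : (1:ℝ)/4 * (π^2/6) = π^2/24 := by ring
  rw [hv] at h
  refine hasSum_congr' h (fun n => ?_)
  push_cast
  field_simp
  ring

lemma summable_even : Summable (fun k : ℕ => 1/(((2*k:ℕ):ℝ)+1)^2) :=
  summable_shift.comp_injective (fun a b h => by omega)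

lemma heven : HasSum (fun k : ℕ => 1/(((2*k:ℕ):ℝ)+1)^2) (π^2/8) := by
  have hE := tsum_even_add_odd (f := fun n : ℕ => 1/((n:ℝ)+1)^2)
    summable_even hodd.summable
  rw [hodd.tsum_eq, hshift.tsum_eq] at hE
  have := summable_even.hasSum
  have hA : (∑' k : ℕ, 1/(((2*k:ℕ):ℝ)+1)^2) = π^2/8 := by linarith
  rwa [hA] at this

lemma hasSum_altzeta : HasSum (fun k : ℕ => (-1:ℝ)^k / ((k:ℝ)+1)^2) (π^2/12) := by
  have he : HasSum (fun k : ℕ => (-1:ℝ)^(2*k) / (((2*k:ℕ):ℝ)+1)^2) (π^2/8) :=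
    hasSum_congr' heven (fun n => by
      have h1 : ((-1:ℝ))^(2*n) = 1 := by rw [pow_mul]; norm_num
      rw [h1])
  have ho : HasSum (fun k : ℕ => (-1:ℝ)^(2*k+1) / (((2*k+1:ℕ):ℝ)+1)^2) (-(π^2/24)) := by
    refine hasSum_congr' hodd.neg (fun n => ?_)
    have h1 : ((-1:ℝ))^(2*n+1) = -1 := by rw [pow_succ, pow_mul]; norm_num
    rw [h1]
    ring
  have h := HasSum.even_add_odd (f := fun k : ℕ => (-1:ℝ)^k / ((k:ℝ)+1)^2) he ho
  have : π^2/8 + -(π^2/24) = π^2/12 := by ring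
  rwa [this] at h

lemma integral_f : (∫ t in Ioi (0:ℝ), f t) = π^2/12 := by
  have hswap := integral_tsum_of_summable_integral_norm (μ := volume.restrict (Ioi (0:ℝ)))
    (F := F) F_integrable (by
      refine Summable.congr summable_shift (fun k => ?_)
      exact (F_norm_integral k).symm)
  have hFk : ∀ k : ℕ, (∫ t in Ioi (0:ℝ), F k t) = (-1:ℝ)^k / ((k:ℝ)+1)^2 := by
    intro k
    have hpos : (0:ℝ) < (k:ℝ)+1 := by positivity
    simp only [F]
    rw [MeasureTheory.integral_const_mul, integral_exp_rate _ hpos]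
    field_simp
  have hcongr : (∫ t in Ioi (0:ℝ), (∑' k, F k t)) = ∫ t in Ioi (0:ℝ), f t := by
    refine setIntegral_congr_fun measurableSet_Ioi (fun t ht => ?_)
    exact (hasSum_F ht).tsum_eq
  rw [← hcongr, ← hswap]
  rw [tsum_congr hFk]
  exact hasSum_altzeta.tsum_eq
end QPAux

open QPAux in
/-- As `q → 1⁻`, `log(-q;q)_∞ = -π²/(12 log q) - (log 2)/2 + O(log q)`. -/
theorem qPochhammer_asymptotic_neg_q :
    (fun q : ℝ => Real.log (∏' n : ℕ, (1 + q ^ (n + 1)))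
        - (-(π ^ 2) / (12 * Real.log q) - Real.log 2 / 2))
      =O[nhdsWithin 1 (Set.Ioo (0:ℝ) 1)] (fun q : ℝ => Real.log q) := by
  rw [Asymptotics.isBigO_iff]
  refine ⟨1/8, ?_⟩
  filter_upwards [self_mem_nhdsWithin] with q hq
  obtain ⟨hq0, hq1⟩ := hq
  set L : ℝ := -Real.log q with hLdef
  have hlogq : Real.log q < 0 := Real.log_neg hq0 hq1
  have hL : 0 < L := by simp only [hLdef]; linarith
  have hqL : q = Real.exp (-L) := by
    rw [hLdef, neg_neg, Real.exp_log hq0]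
  have hq_eq : ∀ n : ℕ, q ^ (n + 1) = Real.exp (-(((n:ℝ)+1) * L)) := by
    intro n
    rw [hqL, ← Real.exp_nat_mul]
    push_cast
    ring_nf
  have hS := (summable_f hL).hasSum
  set S : ℝ := ∑' n : ℕ, f (((n:ℝ)+1) * L) with hSdef
  have hprod : HasProd (fun n : ℕ => 1 + q ^ (n + 1)) (Real.exp S) := by
    have h := hS.rexp
    have heq : (Real.exp ∘ fun n : ℕ => f (((n:ℝ)+1) * L))
        = fun n : ℕ => 1 + q ^ (n + 1) := by
      funext n
      simp only [Function.comp_apply, f_def, hq_eq n]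
      exact Real.exp_log (one_add_exp_pos _)
    rwa [heq] at h
  have htprod : Real.log (∏' n : ℕ, (1 + q ^ (n + 1))) = S := by
    rw [hprod.tprod_eq, Real.log_exp]
  have hmain : -(π ^ 2) / (12 * Real.log q) - Real.log 2 / 2
      = (π^2/12)/L - f 0 / 2 := by
    have hf0 : f 0 = Real.log 2 := by rw [f_def]; norm_num
    have hlq : Real.log q = -L := by rw [hLdef]; ring
    rw [hf0, hlq]
    field_simp
  have hkey := key hL
  rw [integral_f] at hkey
  rw [htprod, hmain]
  have habs : |S - (π^2/12)/L + f 0 / 2| ≤ L/8 := hkey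
  rw [Real.norm_eq_abs, Real.norm_eq_abs, abs_of_neg hlogq]
  have h1 : S - ((π^2/12)/L - f 0 / 2) = S - (π^2/12)/L + f 0 / 2 := by ring
  rw [h1]
  calc |S - (π^2/12)/L + f 0/2| ≤ L/8 := habs
    _ = 1/8 * (-Real.log q) := by rw [← hLdef]; ring
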